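/- Let p > 2 be a real number, let c_a, c_c > 0 be constants, let r_a be an accuracy rate and r_c a cost rate, and assume that c_a·r_a''(n) + c_c·r_c''(n) > 0 for all n in [1, p−1]. Then the function u1 : [1, p−1] → (0, ∞), u1(n) = (c_a·r_a(n) + c_c·r_c(n))/(p − n), attains its global minimum over [1, p−1] at a unique point n1* ∈ [1, p−1]; that is, there exists n1* ∈ [1, p−1] with u1(n1*) ≤ u1(n) for all n ∈ [1, p−1], and u1(n1*) < u1(n) for every n ∈ [1, p−1] with n ≠ n1*. (Proposition 3.1) -/

import Mathlib

open Set

/-- Proposition 3.1: existence and uniqueness of the global minimizer of the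
context-aware objective `u₁(n) = (cₐ·rₐ(n) + c_c·r_c(n))/(p − n)` on `[1, p−1]`. -/
theorem stmt_0
    (p ca cc : ℝ) (ra rc : ℝ → ℝ)
    (hp : 2 < p) (hca : 0 < ca) (hcc : 0 < cc)
    -- `ra` is an accuracy rate: positive, decreasing, twice continuously differentiable on `(0, ∞)`
    (hra_pos : ∀ x ∈ Ioi (0 : ℝ), 0 < ra x)
    (hra_anti : StrictAntiOn ra (Ioi 0))
    (hra_smooth : ContDiffOn ℝ 2 ra (Ioi 0))
    -- `rc` is a cost rate: positive, increasing, twice continuously differentiable on `(0, ∞)`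
    (hrc_pos : ∀ x ∈ Ioi (0 : ℝ), 0 < rc x)
    (hrc_mono : StrictMonoOn rc (Ioi 0))
    (hrc_smooth : ContDiffOn ℝ 2 rc (Ioi 0))
    -- strict convexity condition (3.8)
    (hconv : ∀ n ∈ Icc (1 : ℝ) (p - 1),
      0 < ca * deriv (deriv ra) n + cc * deriv (deriv rc) n) :
    ∃ n₁ ∈ Icc (1 : ℝ) (p - 1),
      (∀ n ∈ Icc (1 : ℝ) (p - 1),
        (ca * ra n₁ + cc * rc n₁) / (p - n₁) ≤ (ca * ra n + cc * rc n) / (p - n)) ∧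
      (∀ n ∈ Icc (1 : ℝ) (p - 1), n ≠ n₁ →
        (ca * ra n₁ + cc * rc n₁) / (p - n₁) < (ca * ra n + cc * rc n) / (p - n)) := by
  -- Notation
  set f : ℝ → ℝ := fun x => ca * ra x + cc * rc x with hfdef
  set f' : ℝ → ℝ := fun x => ca * deriv ra x + cc * deriv rc x with hf'def
  set f'' : ℝ → ℝ := fun x => ca * deriv (deriv ra) x + cc * deriv (deriv rc) x with hf''def
  set φ : ℝ → ℝ := fun x => f' x * (p - x) + f x with hφdef
  set u : ℝ → ℝ := fun x => f x / (p - x) with hudef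
  -- First derivatives of ra, rc
  have hra1 : ContDiffOn ℝ 1 (deriv ra) (Ioi 0) :=
    hra_smooth.deriv_of_isOpen isOpen_Ioi (by norm_num)
  have hrc1 : ContDiffOn ℝ 1 (deriv rc) (Ioi 0) :=
    hrc_smooth.deriv_of_isOpen isOpen_Ioi (by norm_num)
  have hdra : ∀ x ∈ Ioi (0:ℝ), HasDerivAt ra (deriv ra x) x := fun x hx =>
    (((hra_smooth.differentiableOn (by norm_num)).differentiableAt
      (isOpen_Ioi.mem_nhds hx))).hasDerivAt
  have hdrc : ∀ x ∈ Ioi (0:ℝ), HasDerivAt rc (deriv rc x) x := fun x hx =>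
    (((hrc_smooth.differentiableOn (by norm_num)).differentiableAt
      (isOpen_Ioi.mem_nhds hx))).hasDerivAt
  have hdra2 : ∀ x ∈ Ioi (0:ℝ), HasDerivAt (deriv ra) (deriv (deriv ra) x) x := fun x hx =>
    (((hra1.differentiableOn (by norm_num)).differentiableAt (isOpen_Ioi.mem_nhds hx))).hasDerivAt
  have hdrc2 : ∀ x ∈ Ioi (0:ℝ), HasDerivAt (deriv rc) (deriv (deriv rc) x) x := fun x hx =>
    (((hrc1.differentiableOn (by norm_num)).differentiableAt (isOpen_Ioi.mem_nhds hx))).hasDerivAt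
  -- f and its derivatives
  have hdf : ∀ x ∈ Ioi (0:ℝ), HasDerivAt f (f' x) x := by
    intro x hx
    exact ((hdra x hx).const_mul ca).add ((hdrc x hx).const_mul cc)
  have hdf' : ∀ x ∈ Ioi (0:ℝ), HasDerivAt f' (f'' x) x := by
    intro x hx
    exact ((hdra2 x hx).const_mul ca).add ((hdrc2 x hx).const_mul cc)
  -- φ and its derivative
  have hdφ : ∀ x ∈ Ioi (0:ℝ), HasDerivAt φ (f'' x * (p - x)) x := by
    intro x hx
    have h1 : HasDerivAt (fun y : ℝ => p - y) (-1) x := by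
      simpa using (hasDerivAt_id x).const_sub p
    have h2 : HasDerivAt (fun y => f' y * (p - y)) (f'' x * (p - x) + f' x * (-1)) x :=
      (hdf' x hx).mul h1
    have h3 := h2.add (hdf x hx)
    exact h3.congr_deriv (by ring)
  -- u and its derivative
  have hsubIoi : Icc (1:ℝ) (p-1) ⊆ Ioi (0:ℝ) := fun x hx => by
    simp only [mem_Ioi]; linarith [hx.1]
  have hdu : ∀ x ∈ Ioi (0:ℝ), x < p → HasDerivAt u (φ x / (p - x)^2) x := by
    intro x hx hxp
    have hne : p - x ≠ 0 := by linarith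
    have h1 : HasDerivAt (fun y : ℝ => p - y) (-1) x := by
      simpa using (hasDerivAt_id x).const_sub p
    have h2 := (hdf x hx).div h1 hne
    have hne2 : (p - x) ≠ 0 := hne
    exact h2.congr_deriv (by simp only [hφdef]; ring)
  -- Continuity facts
  have hfc : ContinuousOn f (Ioi 0) := by
    apply ContinuousOn.add
    · exact (hra_smooth.continuousOn).const_smul ca |>.congr (fun x _ => by simp [smul_eq_mul])
    · exact (hrc_smooth.continuousOn).const_smul cc |>.congr (fun x _ => by simp [smul_eq_mul])
  have hf'c : ContinuousOn f' (Ioi 0) := by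
    apply ContinuousOn.add
    · exact (hra1.continuousOn).const_smul ca |>.congr (fun x _ => by simp [smul_eq_mul])
    · exact (hrc1.continuousOn).const_smul cc |>.congr (fun x _ => by simp [smul_eq_mul])
  have hφc : ContinuousOn φ (Ioi 0) := by
    exact (hf'c.mul (continuousOn_const.sub continuousOn_id)).add hfc
  have huc : ContinuousOn u (Icc 1 (p-1)) := by
    apply ContinuousOn.div (hfc.mono hsubIoi)
      (continuousOn_const.sub continuousOn_id)
    intro x hx h
    have h : p - x = 0 := h
    have : p = x := by linarith
    linarith [hx.2]
  -- φ strictly monotone on [1, p-1]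
  have hφmono : StrictMonoOn φ (Icc 1 (p-1)) := by
    apply strictMonoOn_of_deriv_pos (convex_Icc 1 (p-1)) (hφc.mono hsubIoi)
    intro x hx
    rw [interior_Icc] at hx
    have hx' : x ∈ Icc (1:ℝ) (p-1) := ⟨le_of_lt hx.1, le_of_lt hx.2⟩
    rw [(hdφ x (hsubIoi hx')).deriv]
    have h1 := hconv x hx'
    have h2 : 0 < p - x := by linarith [hx.2]
    exact mul_pos h1 h2
  -- existence of a minimizer
  have hne : (Icc (1:ℝ) (p-1)).Nonempty := ⟨1, le_refl 1, by linarith⟩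
  obtain ⟨n₁, hn₁, hmin⟩ := isCompact_Icc.exists_isMinOn hne huc
  rw [isMinOn_iff] at hmin
  refine ⟨n₁, hn₁, fun n hn => hmin n hn, ?_⟩
  -- uniqueness: suppose u n = u n₁ with n ≠ n₁
  intro n hn hne'
  by_contra hcon
  push_neg at hcon
  have heq : u n = u n₁ := le_antisymm hcon (hmin n hn)
  -- both n and n₁ are minimizers; let a < b be the two points
  obtain ⟨a, b, hab, ha, hb, hua, hub⟩ :
      ∃ a b, a < b ∧ a ∈ Icc (1:ℝ) (p-1) ∧ b ∈ Icc (1:ℝ) (p-1) ∧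
        (∀ m ∈ Icc (1:ℝ) (p-1), u a ≤ u m) ∧ u b = u a := by
    rcases lt_or_gt_of_ne hne' with h | h
    · exact ⟨n, n₁, h, hn, hn₁, fun m hm => heq ▸ hmin m hm, heq.symm⟩
    · exact ⟨n₁, n, h, hn₁, hn, hmin, heq⟩
  set x := (a + b) / 2 with hxdef
  have hax : a < x := by simp only [hxdef]; linarith
  have hxb : x < b := by simp only [hxdef]; linarith
  have hxmem : x ∈ Icc (1:ℝ) (p-1) := ⟨le_trans ha.1 hax.le, le_trans hxb.le hb.2⟩
  have hIccsub : Icc a b ⊆ Icc (1:ℝ) (p-1) := Icc_subset_Icc ha.1 hb.2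
  have hderiv_on : ∀ y ∈ Icc (1:ℝ) (p-1), HasDerivAt u (φ y / (p - y)^2) y := by
    intro y hy
    exact hdu y (hsubIoi hy) (by linarith [hy.2])
  -- MVT on [a, x]
  obtain ⟨c₁, hc₁, hc₁eq⟩ := exists_hasDerivAt_eq_slope u (fun y => φ y / (p - y)^2) hax
    (huc.mono (Icc_subset_Icc ha.1 (le_trans hxb.le hb.2)))
    (fun y hy => hderiv_on y ⟨le_trans ha.1 hy.1.le, le_trans hy.2.le hxmem.2⟩)
  -- MVT on [x, b]
  obtain ⟨c₂, hc₂, hc₂eq⟩ := exists_hasDerivAt_eq_slope u (fun y => φ y / (p - y)^2) hxb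
    (huc.mono (Icc_subset_Icc hxmem.1 hb.2))
    (fun y hy => hderiv_on y ⟨le_trans hxmem.1 hy.1.le, le_trans hy.2.le hb.2⟩)
  have hc₁mem : c₁ ∈ Icc (1:ℝ) (p-1) :=
    ⟨le_trans ha.1 hc₁.1.le, le_trans hc₁.2.le (le_trans hxb.le hb.2)⟩
  have hc₂mem : c₂ ∈ Icc (1:ℝ) (p-1) :=
    ⟨le_trans hxmem.1 hc₂.1.le, le_trans hc₂.2.le hb.2⟩
  have hsq₁ : (0:ℝ) < (p - c₁)^2 := by
    have h : (0:ℝ) < p - c₁ := by linarith [hc₁mem.2]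
    positivity
  have hsq₂ : (0:ℝ) < (p - c₂)^2 := by
    have h : (0:ℝ) < p - c₂ := by linarith [hc₂mem.2]
    positivity
  -- slope signs
  have hφ₁ : 0 ≤ φ c₁ := by
    have hs : 0 ≤ φ c₁ / (p - c₁)^2 := by
      rw [hc₁eq]
      apply div_nonneg
      · linarith [hua x hxmem]
      · linarith
    have h := mul_nonneg hs hsq₁.le
    rwa [div_mul_cancel₀ _ hsq₁.ne'] at h
  have hφ₂ : φ c₂ ≤ 0 := by
    have hs : φ c₂ / (p - c₂)^2 ≤ 0 := by
      rw [hc₂eq]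
      apply div_nonpos_of_nonpos_of_nonneg
      · have := hua x hxmem
        linarith [hub]
      · linarith
    have h := mul_nonpos_of_nonpos_of_nonneg hs hsq₂.le
    rwa [div_mul_cancel₀ _ hsq₂.ne'] at h
  have hlt : φ c₁ < φ c₂ := hφmono hc₁mem hc₂mem (lt_trans hc₁.2 hc₂.1)
  linarith
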